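/- Let R be a commutative ring, let m ≥ 0 and n ≥ 1 be integers, and let α be an m×m matrix over R. Let V_n(α) be the (nm)×(nm) matrix, written as an n×n array of m×m blocks, whose (i+1, i)-blocks are the identity matrix I_m for 1 ≤ i ≤ n−1, whose (1, n)-block is (−1)^{n+1}·α, and whose remaining blocks are zero. Then in the polynomial ring R[x] one has the identity of determinants det(I_{nm} + x·V_n(α)) = det(I_m + xⁿ·α), where the matrices are regarded as matrices over R[x]. -/

import Mathlib

open Polynomial Matrix Finset

/-- For an `m × m` matrix `α` over a commutative ring `R` and `n ≥ 1`,
the `(nm) × (nm)` block companion-type matrix `V` with identity `m × m` blocks in the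
positions `(i+1, i)` for `1 ≤ i ≤ n-1`, the block `(-1)^(n+1) • α` in position `(1, n)`,
and zero blocks elsewhere (here blocks are indexed by `Fin n`, zero-based), satisfies
`det (1 + x • V) = det (1 + xⁿ • α)` over the polynomial ring `R[x]`. -/
theorem det_one_add_X_smul_verschiebung {R : Type*} [CommRing R]
    (m n : ℕ) (hn : 1 ≤ n)
    (α : Matrix (Fin m) (Fin m) R)
    (V : Matrix (Fin n × Fin m) (Fin n × Fin m) R)
    (hV : ∀ p q : Fin n × Fin m,
      V p q =
        if (p.1 : ℕ) = (q.1 : ℕ) + 1 then (if p.2 = q.2 then 1 else 0)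
        else if (p.1 : ℕ) = 0 ∧ (q.1 : ℕ) = n - 1 then (-1) ^ (n + 1) * α p.2 q.2
        else 0) :
    ((1 : Matrix (Fin n × Fin m) (Fin n × Fin m) R[X]) + (X : R[X]) • V.map C).det
      = ((1 : Matrix (Fin m) (Fin m) R[X]) + (X ^ n : R[X]) • α.map C).det := by
  classical
  by_cases hm : m = 0
  · subst hm
    haveI : IsEmpty (Fin n × Fin 0) := by infer_instance
    simp [Matrix.det_isEmpty]
  -- main case
  set N : Matrix (Fin n × Fin m) (Fin n × Fin m) R[X] :=
    1 + (X : R[X]) • V.map C with hNdef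
  set E : Matrix (Fin n × Fin m) (Fin n × Fin m) R[X] :=
    Matrix.of (fun p q : Fin n × Fin m =>
      if (q.1 : ℕ) = 0 then (if p.2 = q.2 then ((-X : R[X])) ^ (p.1 : ℕ) else 0)
      else if p = q then 1 else 0) with hEdef
  set M' : Matrix (Fin n × Fin m) (Fin n × Fin m) R[X] :=
    Matrix.of (fun p q : Fin n × Fin m =>
      if (q.1 : ℕ) = 0 then
        (if (p.1 : ℕ) = 0 then (if p.2 = q.2 then 1 else 0) + X ^ n * C (α p.2 q.2)
         else 0)
      else (if p = q then 1 else 0) + X * C (V p q)) with hM'def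
  have hNentry : ∀ p q : Fin n × Fin m,
      N p q = (if p = q then 1 else 0) + X * C (V p q) := by
    intro p q
    simp [hNdef, Matrix.add_apply, Matrix.one_apply, Matrix.smul_apply,
      Matrix.map_apply, smul_eq_mul]
  -- Step 1 : N * E = M'
  have hNE : N * E = M' := by
    apply Matrix.ext
    intro p q
    rw [Matrix.mul_apply]
    by_cases hq : (q.1 : ℕ) = 0
    · rw [Fintype.sum_prod_type]
      have h1 : ∀ l : Fin n,
          (∑ c : Fin m, N p (l, c) * E (l, c) q)
            = N p (l, q.2) * ((-X : R[X])) ^ (l : ℕ) := by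
        intro l
        rw [Finset.sum_eq_single q.2]
        · simp [hEdef, hq]
        · intro c _ hc
          simp [hEdef, hq, hc]
        · simp
      simp only [h1]
      have h2 : ∀ l : Fin n, N p (l, q.2) * ((-X : R[X])) ^ (l : ℕ)
          = (if p = (l, q.2) then ((-X : R[X])) ^ (l : ℕ) else 0)
            + X * C (V p (l, q.2)) * ((-X : R[X])) ^ (l : ℕ) := by
        intro l
        rw [hNentry]
        by_cases h : p = (l, q.2) <;> simp [h] <;> ring
      simp only [h2, Finset.sum_add_distrib]
      have hS1 : (∑ l : Fin n, if p = (l, q.2) then ((-X : R[X])) ^ (l : ℕ) else 0)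
          = if p.2 = q.2 then ((-X : R[X])) ^ (p.1 : ℕ) else 0 := by
        rw [Finset.sum_eq_single p.1]
        · by_cases h : p.2 = q.2
          · simp [← h]
          · have : p ≠ (p.1, q.2) := by
              intro hh; exact h (by rw [hh])
            simp [this, h]
        · intro l _ hl
          have : p ≠ (l, q.2) := by
            intro hh; exact hl (by rw [hh])
          simp [this]
        · simp
      rw [hS1]
      by_cases hp : (p.1 : ℕ) = 0
      · -- p in the top block row
        have hS2 : (∑ l : Fin n, X * C (V p (l, q.2)) * ((-X : R[X])) ^ (l : ℕ))
            = X * C ((-1) ^ (n + 1) * α p.2 q.2) * ((-X : R[X])) ^ (n - 1) := by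
          rw [Finset.sum_eq_single (⟨n - 1, by omega⟩ : Fin n)]
          · rw [hV]
            rw [if_neg (by simp; omega), if_pos ⟨hp, by simp⟩]
          · intro l _ hl
            have hl' : (l : ℕ) ≠ n - 1 := by
              intro hh
              exact hl (Fin.ext (by simpa using hh))
            rw [hV]
            rw [if_neg (by omega), if_neg (by rintro ⟨-, hh⟩; exact hl' hh)]
            simp
          · simp
        rw [hS2]
        have hsign : (X : R[X]) * C ((-1) ^ (n + 1) * α p.2 q.2) * ((-X : R[X])) ^ (n - 1)
            = X ^ n * C (α p.2 q.2) := by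
          obtain ⟨k, rfl⟩ : ∃ k, n = k + 1 := ⟨n - 1, by omega⟩
          rw [_root_.map_mul, _root_.map_pow, map_neg, Polynomial.C_1,
            show k + 1 - 1 = k from rfl, neg_pow (X : R[X]) k]
          have h1 : ((-1 : R[X]) ^ (k + 1 + 1) * (-1) ^ k) = 1 := by
            rw [← pow_add]
            rw [show k + 1 + 1 + k = 2 * (k + 1) by omega, pow_mul]
            norm_num
          calc X * ((-1 : R[X]) ^ (k + 1 + 1) * C (α p.2 q.2)) *
                ((-1 : R[X]) ^ k * X ^ k)
              = ((-1 : R[X]) ^ (k + 1 + 1) * (-1) ^ k) *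
                (X ^ (k + 1) * C (α p.2 q.2)) := by ring
            _ = X ^ (k + 1) * C (α p.2 q.2) := by rw [h1, one_mul]
        have hM : M' p q
            = (if p.2 = q.2 then 1 else 0) + X ^ n * C (α p.2 q.2) := by
          rw [hM'def]
          show (if (q.1 : ℕ) = 0 then _ else _) = _
          rw [if_pos hq, if_pos hp]
        rw [hM, hsign, hp, pow_zero]
      · -- p in lower rows : everything cancels
        have hp1 : 1 ≤ (p.1 : ℕ) := by omega
        have hS2 : (∑ l : Fin n, X * C (V p (l, q.2)) * ((-X : R[X])) ^ (l : ℕ))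
            = (if p.2 = q.2 then 1 else 0) * (X * ((-X : R[X])) ^ ((p.1 : ℕ) - 1)) := by
          rw [Finset.sum_eq_single (⟨(p.1 : ℕ) - 1, by omega⟩ : Fin n)]
          · rw [hV]
            rw [if_pos (by simp; omega)]
            by_cases h : p.2 = q.2 <;> simp [h] <;> ring
          · intro l _ hl
            have hl' : (p.1 : ℕ) ≠ (l : ℕ) + 1 := by
              intro hh
              exact hl (Fin.ext (by simp; omega))
            rw [hV]
            rw [if_neg hl', if_neg (by rintro ⟨hh, -⟩; exact hp hh)]
            simp
          · simp
        rw [hS2]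
        have hM : M' p q = 0 := by
          rw [hM'def]
          show (if (q.1 : ℕ) = 0 then _ else _) = _
          rw [if_pos hq, if_neg hp]
        rw [hM]
        by_cases h : p.2 = q.2
        · rw [if_pos h, if_pos h, one_mul]
          obtain ⟨j, hj⟩ : ∃ j, (p.1 : ℕ) = j + 1 := ⟨(p.1 : ℕ) - 1, by omega⟩
          rw [hj, Nat.add_sub_cancel, pow_succ]
          ring
        · simp [h]
    · -- q not in the first block column
      have h1 : ∀ x : Fin n × Fin m,
          N p x * E x q = if x = q then N p x else 0 := by
        intro x
        by_cases h : x = q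
        · simp [hEdef, h, hq]
        · simp [hEdef, h, hq]
      rw [Finset.sum_congr rfl fun x _ => h1 x]
      rw [Finset.sum_ite_eq' Finset.univ q (fun x => N p x)]
      simp only [Finset.mem_univ, if_pos]
      rw [hNentry]
      rw [hM'def]
      show _ = (if (q.1 : ℕ) = 0 then _ else _)
      rw [if_neg hq]
  -- block-triangularity weight functions
  set bE : Fin n × Fin m → ℕ := fun p => n - (p.1 : ℕ) with hbEdef
  set bM : Fin n × Fin m → ℕ :=
    fun p => if (p.1 : ℕ) = 0 then 0 else n - (p.1 : ℕ) with hbMdef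
  -- Step 2 : det E = 1
  have hEbt : E.BlockTriangular bE := by
    intro p q hlt
    by_cases hq : (q.1 : ℕ) = 0
    · exfalso
      have h1 := q.1.isLt
      have h2 := p.1.isLt
      simp only [hbEdef, hq, Nat.sub_zero] at hlt
      omega
    · have hpq : p ≠ q := by
        intro hh
        rw [hh] at hlt
        exact lt_irrefl _ hlt
      simp [hEdef, hq, hpq]
  have hEdet : E.det = 1 := by
    rw [hEbt.det]
    apply Finset.prod_eq_one
    intro a _
    have hone : E.toSquareBlock bE a = 1 := by
      apply Matrix.ext
      rintro ⟨p, hp⟩ ⟨q, hq⟩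
      have hpq1 : p.1 = q.1 := by
        have h1 := p.1.isLt
        have h2 := q.1.isLt
        simp only [hbEdef] at hp hq
        exact Fin.ext (by omega)
      rw [Matrix.toSquareBlock_def]
      by_cases h0 : (q.1 : ℕ) = 0
      · have hp0 : (p.1 : ℕ) = 0 := by rw [hpq1]; exact h0
        show (if (q.1 : ℕ) = 0 then _ else _) = _
        rw [if_pos h0, hp0, pow_zero]
        by_cases h : p.2 = q.2
        · have hpq : p = q := Prod.ext hpq1 h
          simp [h, Matrix.one_apply, Subtype.ext_iff, hpq]
        · have hpq : p ≠ q := fun hh => h (by rw [hh])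
          simp [h, Matrix.one_apply, Subtype.ext_iff, hpq]
      · show (if (q.1 : ℕ) = 0 then _ else _) = _
        rw [if_neg h0]
        simp [Matrix.one_apply, Subtype.ext_iff]
    rw [hone, Matrix.det_one]
  -- Step 3 : det M' = det (1 + X^n • α.map C)
  have hMbt : M'.BlockTriangular bM := by
    intro p q hlt
    have hp0 : (p.1 : ℕ) ≠ 0 := by
      intro hh
      simp [hbMdef, hh] at hlt
    by_cases hq : (q.1 : ℕ) = 0
    · show (if (q.1 : ℕ) = 0 then _ else _) = _
      rw [if_pos hq, if_neg hp0]
    · have hlt' : (p.1 : ℕ) < (q.1 : ℕ) := by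
        have h1 := p.1.isLt
        have h2 := q.1.isLt
        simp only [hbMdef, hp0, hq, if_neg, if_false] at hlt
        omega
      have hpq : p ≠ q := by
        intro hh; rw [hh] at hlt'; omega
      have hV0 : V p q = 0 := by
        rw [hV]
        rw [if_neg (by omega), if_neg (by rintro ⟨hh, -⟩; exact hp0 hh)]
      show (if (q.1 : ℕ) = 0 then _ else _) = _
      rw [if_neg hq, if_neg hpq, hV0, map_zero, mul_zero, add_zero]
  have hzero_mem : (0 : ℕ) ∈ Finset.image bM Finset.univ := by
    refine Finset.mem_image.mpr ⟨(⟨0, hn⟩, ⟨0, by omega⟩), Finset.mem_univ _, ?_⟩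
    simp [hbMdef]
  have hM'det : M'.det
      = ((1 : Matrix (Fin m) (Fin m) R[X]) + (X ^ n : R[X]) • α.map C).det := by
    rw [hMbt.det]
    have hother : ∀ a ∈ Finset.image bM Finset.univ, a ≠ 0 →
        (M'.toSquareBlock bM a).det = 1 := by
      intro a _ ha
      have hone : M'.toSquareBlock bM a = 1 := by
        apply Matrix.ext
        rintro ⟨p, hp⟩ ⟨q, hq⟩
        have hp0 : (p.1 : ℕ) ≠ 0 := by
          intro hh; apply ha; rw [← hp]; simp [hbMdef, hh]
        have hq0 : (q.1 : ℕ) ≠ 0 := by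
          intro hh; apply ha; rw [← hq]; simp [hbMdef, hh]
        have hpq1 : p.1 = q.1 := by
          have h1 := p.1.isLt
          have h2 := q.1.isLt
          simp only [hbMdef, hp0, hq0, if_neg, if_false] at hp hq
          exact Fin.ext (by omega)
        have hV0 : V p q = 0 := by
          rw [hV]
          rw [if_neg (by rw [hpq1]; omega), if_neg (by rintro ⟨hh, -⟩; exact hp0 hh)]
        rw [Matrix.toSquareBlock_def]
        show (if (q.1 : ℕ) = 0 then _ else _) = _
        rw [if_neg hq0, hV0, map_zero, mul_zero, add_zero]
        by_cases h : p = q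
        · simp [h, Matrix.one_apply, Subtype.ext_iff]
        · simp [h, Matrix.one_apply, Subtype.ext_iff]
      rw [hone, Matrix.det_one]
    rw [Finset.prod_eq_single_of_mem 0 hzero_mem hother]
    -- the 0 block
    let e : Fin m ≃ { p : Fin n × Fin m // bM p = 0 } :=
      { toFun := fun a => ⟨(⟨0, hn⟩, a), by simp [hbMdef]⟩
        invFun := fun p => p.1.2
        left_inv := fun a => rfl
        right_inv := by
          rintro ⟨⟨i, a⟩, hp⟩
          have hi : (i : ℕ) = 0 := by
            by_contra hh
            have h1 := i.isLt
            simp only [hbMdef, hh, if_neg, if_false] at hp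
            omega
          exact Subtype.ext (Prod.ext (Fin.ext (by simpa using hi.symm)) rfl) }
    have hblock : (M'.toSquareBlock bM 0).submatrix ⇑e ⇑e
        = (1 : Matrix (Fin m) (Fin m) R[X]) + (X ^ n : R[X]) • α.map C := by
      apply Matrix.ext
      intro a b
      simp only [Matrix.submatrix_apply]
      rw [Matrix.toSquareBlock_def]
      show M' (⟨0, hn⟩, a) (⟨0, hn⟩, b) = _
      rw [hM'def]
      simp [Matrix.add_apply, Matrix.one_apply, Matrix.smul_apply,
        Matrix.map_apply, smul_eq_mul]
    rw [← Matrix.det_submatrix_equiv_self e (M'.toSquareBlock bM 0), hblock]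
  calc N.det = N.det * E.det := by rw [hEdet, mul_one]
    _ = (N * E).det := (Matrix.det_mul N E).symm
    _ = M'.det := by rw [hNE]
    _ = _ := hM'det
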